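/- Let (X_J)_{J∈𝒥} be a real-valued exchangeable array. Let k_1 > k_2 > … > k_l ∈ {1,…,k}, let h_1,…,h_l be positive integers, and set L = Σ_{j=1}^l h_j k_j and p = Σ_{j=1}^l h_j. Let {J_m}_{m=1}^p be a partition of the set {1,…,L} which, for each j, contains exactly h_j sets of size k_j. Assume E[|X_{{1,…,k_j}}|^p] < ∞ for all j. Then E[∏_{j=1}^l (T^{(k_j)})^{h_j}] = E[∏_{m=1}^p X_{J_m}]. -/

import Mathlib

open MeasureTheory Filter Topology

noncomputable section

/-- The index set `𝒥`: nonempty subsets of `ℕ` of cardinality at most `k`. -/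
abbrev Idx (k : ℕ) := {J : Finset ℕ // J.Nonempty ∧ J.card ≤ k}

/-- Action of a permutation of `ℕ` on the index set: `J ↦ τ(J)`. -/
def permIdx (k : ℕ) (τ : Equiv.Perm ℕ) (J : Idx k) : Idx k :=
  ⟨J.1.image τ, J.2.1.image τ, by
    rw [Finset.card_image_of_injective _ τ.injective]; exact J.2.2⟩

/-- Action of a permutation on the canonical space `V ^ 𝒥`. -/
def permAct (k : ℕ) (V : Type*) (τ : Equiv.Perm ℕ) (ω : Idx k → V) : Idx k → V :=
  fun J => ω (permIdx k τ J)

/-- Exchangeability of the canonical array. -/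
def IsExchangeable (k : ℕ) {V : Type*} [MeasurableSpace V] (P : Measure (Idx k → V)) : Prop :=
  ∀ τ : Equiv.Perm ℕ, {x | τ x ≠ x}.Finite → Measure.map (permAct k V τ) P = P

/-- The normalized `U`-statistic `T_N^{(d)} = binom(N,d)⁻¹ Σ_{J ⊆ {0,…,N-1}, |J| = d} X_J`. -/
def TNstat (k d : ℕ) (hd : 0 < d) (hdk : d ≤ k) (N : ℕ) (ω : Idx k → ℝ) : ℝ :=
  ((N.choose d : ℝ))⁻¹ *
    ∑ J ∈ (Finset.powersetCard d (Finset.range N)).attach,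
      ω ⟨J.1, by
        have h := Finset.mem_powersetCard.mp J.2
        exact ⟨Finset.card_pos.mp (by rw [h.2]; exact hd), by rw [h.2]; exact hdk⟩⟩

/-- The index `{0, …, d-1}` (the canonical set of cardinality `d`). -/
def idxRange (k d : ℕ) (hd : 0 < d) (hdk : d ≤ k) : Idx k :=
  ⟨Finset.range d, Finset.nonempty_range_iff.mpr hd.ne', by
    rw [Finset.card_range]; exact hdk⟩

/-- Extend a card-equality between two finsets to a permutation of `ℕ` supported
on their union and mapping the first onto the second. -/
lemma exists_perm_of_card_eq (C D : Finset ℕ) (hcd : C.card = D.card) :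
    ∃ τ : Equiv.Perm ℕ, (∀ x, τ x ≠ x → x ∈ C ∪ D) ∧ C.image τ = D := by
  classical
  set S : Finset ℕ := C ∪ D with hS
  have hCS : ∀ x ∈ C, x ∈ S := fun x hx => Finset.mem_union_left _ hx
  have hDS : ∀ x ∈ D, x ∈ S := fun x hx => Finset.mem_union_right _ hx
  -- subtype-of-subtype equivalences
  let pC : {x : ℕ // x ∈ S} → Prop := fun x => x.1 ∈ C
  let pD : {x : ℕ // x ∈ S} → Prop := fun x => x.1 ∈ D
  have cardC : Fintype.card {y : {x : ℕ // x ∈ S} // pC y} = C.card := by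
    rw [Fintype.card_congr (Equiv.subtypeSubtypeEquivSubtype (fun {x} hx => hCS x hx))]
    exact Fintype.card_coe C
  have cardD : Fintype.card {y : {x : ℕ // x ∈ S} // pD y} = D.card := by
    rw [Fintype.card_congr (Equiv.subtypeSubtypeEquivSubtype (fun {x} hx => hDS x hx))]
    exact Fintype.card_coe D
  have hcc : Fintype.card {y : {x : ℕ // x ∈ S} // pC y}
      = Fintype.card {y : {x : ℕ // x ∈ S} // pD y} := by rw [cardC, cardD, hcd]
  let e₁ : {y : {x : ℕ // x ∈ S} // pC y} ≃ {y : {x : ℕ // x ∈ S} // pD y} :=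
    Fintype.equivOfCardEq hcc
  have hcc' : Fintype.card {y : {x : ℕ // x ∈ S} // ¬ pC y}
      = Fintype.card {y : {x : ℕ // x ∈ S} // ¬ pD y} := by
    rw [Fintype.card_subtype_compl, Fintype.card_subtype_compl, hcc]
  let e₂ : {y : {x : ℕ // x ∈ S} // ¬ pC y} ≃ {y : {x : ℕ // x ∈ S} // ¬ pD y} :=
    Fintype.equivOfCardEq hcc'
  let π : Equiv.Perm {x : ℕ // x ∈ S} :=
    (Equiv.sumCompl pC).symm.trans ((Equiv.sumCongr e₁ e₂).trans (Equiv.sumCompl pD))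
  let τ : Equiv.Perm ℕ := π.extendDomain (Equiv.refl _)
  have hτ_not : ∀ x : ℕ, x ∉ S → τ x = x := fun x hx =>
    π.extendDomain_apply_not_subtype (Equiv.refl _) hx
  have hτ_mem : ∀ x ∈ C, τ x ∈ D := by
    intro x hx
    have hxS : x ∈ S := hCS x hx
    have : τ x = ((π ⟨x, hxS⟩) : ℕ) := by
      have := π.extendDomain_apply_subtype (Equiv.refl _) hxS
      simpa using this
    rw [this]
    have hπ : π ⟨x, hxS⟩ = ((e₁ ⟨⟨x, hxS⟩, hx⟩ : {y : {x : ℕ // x ∈ S} // pD y}) : {x : ℕ // x ∈ S}) := by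
      show ((Equiv.sumCompl pD)) ((Equiv.sumCongr e₁ e₂) ((Equiv.sumCompl pC).symm ⟨x, hxS⟩)) = _
      rw [Equiv.sumCompl_symm_apply_of_pos (p := pC) hx]
      rfl
    rw [hπ]
    exact (e₁ ⟨⟨x, hxS⟩, hx⟩).2
  refine ⟨τ, ?_, ?_⟩
  · intro x hx
    by_contra hxS
    exact hx (hτ_not x (by simpa [hS] using hxS))
  · apply Finset.eq_of_subset_of_card_le
    · intro y hy
      rcases Finset.mem_image.mp hy with ⟨x, hx, rfl⟩
      exact hτ_mem x hx
    · rw [Finset.card_image_of_injective _ τ.injective, hcd]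

/-- Map one pairwise-disjoint family of finsets onto another of the same shape
by a finitely supported permutation of `ℕ`. -/
lemma exists_perm_blocks : ∀ {n : ℕ} (A B : Fin n → Finset ℕ),
    (∀ i j, i ≠ j → Disjoint (A i) (A j)) → (∀ i j, i ≠ j → Disjoint (B i) (B j)) →
    (∀ i, (A i).card = (B i).card) →
    ∃ τ : Equiv.Perm ℕ, {x | τ x ≠ x}.Finite ∧ ∀ i, (A i).image τ = B i := by
  intro n
  induction n with
  | zero => exact fun A B _ _ _ => ⟨1, by simp, fun i => i.elim0⟩
  | succ n ih =>
    intro A B hA hB hcard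
    obtain ⟨τ', hτ'fin, hτ'⟩ := ih (fun i => A i.castSucc) (fun i => B i.castSucc)
      (fun i j hij => hA _ _ (by simpa using hij)) (fun i j hij => hB _ _ (by simpa using hij))
      (fun i => hcard i.castSucc)
    set C : Finset ℕ := (A (Fin.last n)).image τ' with hC
    set D : Finset ℕ := B (Fin.last n) with hD
    obtain ⟨σ, hσsupp, hσ⟩ := exists_perm_of_card_eq C D
      (by rw [hC, Finset.card_image_of_injective _ τ'.injective]; exact hcard _)
    refine ⟨σ * τ', ?_, ?_⟩
    · apply Set.Finite.subset (Set.Finite.union ((C ∪ D).finite_toSet) hτ'fin)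
      intro x hx
      by_cases hx' : τ' x = x
      · left
        have hne : σ x ≠ x := by
          intro hc; apply hx; show σ (τ' x) = x; rw [hx', hc]
        exact_mod_cast hσsupp x hne
      · exact Or.inr hx' 
    · intro i
      have himg : ∀ i, (A i).image (σ * τ') = ((A i).image τ').image σ := by
        intro i; rw [Finset.image_image]; rfl
      refine Fin.lastCases ?_ ?_ i
      · rw [himg _, ← hC, hσ]
        
      · intro i
        rw [himg _, hτ' i]
        have hfix : ∀ x ∈ B i.castSucc, σ x = x := by
          intro x hx
          by_contra hne
          have hxCD := hσsupp x hne
          rcases Finset.mem_union.mp hxCD with hxC | hxD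
          · rcases Finset.mem_image.mp hxC with ⟨a, ha, hax⟩
            rw [← hτ' i] at hx
            rcases Finset.mem_image.mp hx with ⟨a', ha', ha'x⟩
            have : a = a' := τ'.injective (by rw [hax, ha'x])
            exact absurd ((hA i.castSucc (Fin.last n)
              (by simp [Fin.ext_iff, (Fin.castSucc_lt_last i).ne])).le_bot
              (Finset.mem_inter.mpr ⟨ha', this ▸ ha⟩)) (by simp)
          · exact absurd ((hB i.castSucc (Fin.last n)
              (by simp [Fin.ext_iff, (Fin.castSucc_lt_last i).ne])).le_bot
              (Finset.mem_inter.mpr ⟨hx, hxD⟩)) (by simp)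
        calc (B i.castSucc).image σ = (B i.castSucc).image id := Finset.image_congr
              (fun x hx => hfix x hx)
          _ = B i.castSucc := Finset.image_id

/-- The value of the array at a plain finset (zero if the finset is not a valid index). -/
def XV (k : ℕ) (ω : Idx k → ℝ) (J : Finset ℕ) : ℝ :=
  if h : J.Nonempty ∧ J.card ≤ k then ω ⟨J, h⟩ else 0

lemma permIdx_permIdx (k : ℕ) (τ σ : Equiv.Perm ℕ) (J : Idx k) :
    permIdx k σ (permIdx k τ J) = permIdx k (σ * τ) J := by
  apply Subtype.ext
  show ((J.1.image τ).image σ) = J.1.image (σ * τ)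
  rw [Finset.image_image]
  rfl

lemma permAct_permAct (k : ℕ) (V : Type*) (τ σ : Equiv.Perm ℕ) (ω : Idx k → V) :
    permAct k V τ (permAct k V σ ω) = permAct k V (σ * τ) ω := by
  funext J
  show ω (permIdx k σ (permIdx k τ J)) = ω (permIdx k (σ * τ) J)
  rw [permIdx_permIdx]

lemma permAct_one (k : ℕ) (V : Type*) (ω : Idx k → V) : permAct k V 1 ω = ω := by
  funext J
  show ω (permIdx k 1 J) = ω J
  congr 1
  apply Subtype.ext
  show J.1.image (1 : Equiv.Perm ℕ) = J.1
  simp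

lemma measurable_permAct (k : ℕ) (τ : Equiv.Perm ℕ) :
    Measurable (permAct k ℝ τ) :=
  measurable_pi_lambda _ fun J => measurable_pi_apply _

/-- `permAct` as a measurable equivalence. -/
def permEquiv (k : ℕ) (τ : Equiv.Perm ℕ) : (Idx k → ℝ) ≃ᵐ (Idx k → ℝ) where
  toFun := permAct k ℝ τ
  invFun := permAct k ℝ τ⁻¹
  left_inv := fun ω => by rw [permAct_permAct, mul_inv_cancel, permAct_one]
  right_inv := fun ω => by rw [permAct_permAct, inv_mul_cancel, permAct_one]
  measurable_toFun := measurable_permAct k τ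
  measurable_invFun := measurable_permAct k τ⁻¹

lemma integral_permAct {k : ℕ} {P : Measure (Idx k → ℝ)} (hP : IsExchangeable k P)
    (τ : Equiv.Perm ℕ) (hτ : {x | τ x ≠ x}.Finite) (g : (Idx k → ℝ) → ℝ) :
    ∫ ω, g (permAct k ℝ τ ω) ∂P = ∫ ω, g ω ∂P := by
  conv_rhs => rw [← hP τ hτ]
  have h1 : Measure.map (permAct k ℝ τ) P = Measure.map (permEquiv k τ) P := rfl
  rw [h1, MeasureTheory.integral_map_equiv]
  rfl

lemma integrable_permAct {k : ℕ} {P : Measure (Idx k → ℝ)} (hP : IsExchangeable k P)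
    (τ : Equiv.Perm ℕ) (hτ : {x | τ x ≠ x}.Finite) {g : (Idx k → ℝ) → ℝ}
    (hg : Integrable g P) : Integrable (fun ω => g (permAct k ℝ τ ω)) P := by
  have hpres : MeasurePreserving (permEquiv k τ) P P := ⟨measurable_permAct k τ, hP τ hτ⟩
  exact (hpres.integrable_comp_emb ((permEquiv k τ).measurableEmbedding)).mpr hg

lemma XV_image (k : ℕ) (τ : Equiv.Perm ℕ) (ω : Idx k → ℝ) (J : Finset ℕ) :
    XV k ω (J.image τ) = XV k (permAct k ℝ τ ω) J := by
  unfold XV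
  by_cases h : J.Nonempty ∧ J.card ≤ k
  · have h' : (J.image τ).Nonempty ∧ (J.image τ).card ≤ k := by
      refine ⟨h.1.image τ, ?_⟩
      rw [Finset.card_image_of_injective _ τ.injective]; exact h.2
    rw [dif_pos h', dif_pos h]
    rfl
  · have h' : ¬ ((J.image τ).Nonempty ∧ (J.image τ).card ≤ k) := by
      rw [Finset.image_nonempty, Finset.card_image_of_injective _ τ.injective]
      exact h
    rw [dif_neg h', dif_neg h]

lemma XV_coe {k : ℕ} (ω : Idx k → ℝ) (J : Idx k) : XV k ω J.1 = ω J := by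
  unfold XV
  rw [dif_pos J.2]

lemma TNstat_eq (k d : ℕ) (hd : 0 < d) (hdk : d ≤ k) (N : ℕ) (ω : Idx k → ℝ) :
    TNstat k d hd hdk N ω =
      ((N.choose d : ℝ))⁻¹ * ∑ J ∈ Finset.powersetCard d (Finset.range N), XV k ω J := by
  unfold TNstat
  congr 1
  rw [← Finset.sum_attach (Finset.powersetCard d (Finset.range N)) (fun J => XV k ω J)]
  apply Finset.sum_congr rfl
  intro J _
  have h := Finset.mem_powersetCard.mp J.2
  unfold XV
  rw [dif_pos ⟨Finset.card_pos.mp (by rw [h.2]; exact hd), by rw [h.2]; exact hdk⟩]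

/-- Transport of a joint moment along a block permutation. -/
lemma integral_prod_XV_eq {k : ℕ} {P : Measure (Idx k → ℝ)} (hP : IsExchangeable k P)
    {n : ℕ} (A B : Fin n → Finset ℕ)
    (hA : ∀ i j, i ≠ j → Disjoint (A i) (A j)) (hB : ∀ i j, i ≠ j → Disjoint (B i) (B j))
    (hcard : ∀ i, (A i).card = (B i).card) :
    ∫ ω, ∏ m, XV k ω (A m) ∂P = ∫ ω, ∏ m, XV k ω (B m) ∂P := by
  obtain ⟨τ, hfin, himg⟩ := exists_perm_blocks B A hB hA (fun i => (hcard i).symm)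
  calc ∫ ω, ∏ m, XV k ω (A m) ∂P
      = ∫ ω, ∏ m, XV k (permAct k ℝ τ ω) (B m) ∂P := by
        apply integral_congr_ae
        filter_upwards with ω
        apply Finset.prod_congr rfl
        intro m _
        rw [← XV_image, himg m]
    _ = ∫ ω, ∏ m, XV k ω (B m) ∂P :=
        integral_permAct hP τ hfin (fun ω => ∏ m, XV k ω (B m))

/-- Transport of a single-variable functional along a permutation. -/
lemma integral_comp_XV_eq {k : ℕ} {P : Measure (Idx k → ℝ)} (hP : IsExchangeable k P)
    (A B : Finset ℕ) (hcard : A.card = B.card) (F : ℝ → ℝ) :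
    ∫ ω, F (XV k ω A) ∂P = ∫ ω, F (XV k ω B) ∂P := by
  obtain ⟨τ, hsupp, himg⟩ := exists_perm_of_card_eq B A hcard.symm
  have hfin : {x | τ x ≠ x}.Finite :=
    Set.Finite.subset (B ∪ A).finite_toSet (fun x hx => by exact_mod_cast hsupp x hx)
  calc ∫ ω, F (XV k ω A) ∂P
      = ∫ ω, F (XV k (permAct k ℝ τ ω) B) ∂P := by
        apply integral_congr_ae
        filter_upwards with ω
        rw [← XV_image, himg]
    _ = ∫ ω, F (XV k ω B) ∂P := integral_permAct hP τ hfin (fun ω => F (XV k ω B))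

lemma integrable_comp_XV {k : ℕ} {P : Measure (Idx k → ℝ)} (hP : IsExchangeable k P)
    (A B : Finset ℕ) (hcard : A.card = B.card) (F : ℝ → ℝ)
    (hB : Integrable (fun ω => F (XV k ω B)) P) :
    Integrable (fun ω => F (XV k ω A)) P := by
  obtain ⟨τ, hsupp, himg⟩ := exists_perm_of_card_eq B A hcard.symm
  have hfin : {x | τ x ≠ x}.Finite :=
    Set.Finite.subset (B ∪ A).finite_toSet (fun x hx => by exact_mod_cast hsupp x hx)
  have := integrable_permAct hP τ hfin hB
  apply this.congr
  filter_upwards with ω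
  rw [← XV_image, himg]


lemma prod_abs_le_sum_pow {n : ℕ} (hn : 0 < n) (x : Fin n → ℝ) :
    ∏ m, |x m| ≤ (n : ℝ)⁻¹ * ∑ m, |x m| ^ n := by
  have hn' : (n : ℝ) ≠ 0 := by exact_mod_cast hn.ne'
  have key := Real.geom_mean_le_arith_mean_weighted Finset.univ
    (fun _ : Fin n => (n : ℝ)⁻¹) (fun m => |x m| ^ n)
    (fun _ _ => by positivity)
    (by rw [Finset.sum_const, Finset.card_univ, Fintype.card_fin, nsmul_eq_mul,
          mul_inv_cancel₀ hn'])
    (fun m _ => by positivity)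
  calc ∏ m, |x m| = ∏ m, (|x m| ^ n) ^ ((n : ℝ)⁻¹) := by
        apply Finset.prod_congr rfl; intro m _
        rw [← Real.rpow_natCast |x m| n, ← Real.rpow_mul (abs_nonneg _),
          mul_inv_cancel₀ hn', Real.rpow_one]
    _ ≤ ∑ m, (n : ℝ)⁻¹ * |x m| ^ n := key
    _ = (n : ℝ)⁻¹ * ∑ m, |x m| ^ n := by rw [Finset.mul_sum]

/-- Truncation at level `M`. -/
def trunc (M x : ℝ) : ℝ := max (min x M) (-M)

lemma abs_trunc_le (M x : ℝ) (hM : 0 ≤ M) : |trunc M x| ≤ M := by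
  rw [abs_le]
  exact ⟨le_max_right _ _, max_le (min_le_right _ _) (by linarith)⟩

lemma abs_sub_trunc_le (M x : ℝ) (hM : 0 ≤ M) : |x - trunc M x| ≤ max (|x| - M) 0 := by
  unfold trunc
  rcases le_total x M with h1 | h1
  · rcases le_total (-M) x with h2 | h2
    · rw [min_eq_left h1, max_eq_left h2]; simp
    · rw [min_eq_left h1, max_eq_right h2]
      have hax : |x| = -x := abs_of_nonpos (by linarith)
      have h3 : |x - -M| = -x - M := by rw [abs_of_nonpos (by linarith)]; ring
      rw [h3, hax]
      exact le_max_left _ _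
  · rw [min_eq_right h1, max_eq_left (by linarith)]
    have hx : 0 ≤ x := le_trans hM h1
    rw [abs_of_nonneg (by linarith : (0:ℝ) ≤ x - M), abs_of_nonneg hx]
    exact le_max_left _ _

lemma abs_trunc_sub_trunc_le (M a b : ℝ) : |trunc M a - trunc M b| ≤ |a - b| := by
  refine le_trans (abs_max_sub_max_le_abs _ _ _) ?_
  have h := abs_min_sub_min_le_max a M b M
  simpa using h

lemma abs_sub_le_trunc (M a b : ℝ) (hM : 0 ≤ M) :
    |a - b| ≤ |trunc M a - trunc M b| + max (|a| - M) 0 + max (|b| - M) 0 := by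
  have h1 := abs_sub_trunc_le M a hM
  have h2 := abs_sub_trunc_le M b hM
  have h3 : a - b = (a - trunc M a) + (trunc M a - trunc M b) + (trunc M b - b) := by ring
  have h4 : |trunc M b - b| = |b - trunc M b| := abs_sub_comm _ _
  calc |a - b| ≤ |a - trunc M a| + |trunc M a - trunc M b| + |trunc M b - b| := by
        rw [h3]; exact abs_add_three _ _ _
    _ ≤ _ := by rw [h4]; linarith

lemma max_sub_sum_le {ι : Type*} (t : Finset ι) (w : ℝ) (hw : 0 ≤ w) (u : ι → ℝ) (M : ℝ)
    (hsum : w * t.card = 1) :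
    max ((∑ i ∈ t, w * u i) - M) 0 ≤ ∑ i ∈ t, w * max (u i - M) 0 := by
  apply max_le
  · have key : ∑ i ∈ t, w * (u i - M) = (∑ i ∈ t, w * u i) - M := by
      simp only [mul_sub]
      rw [Finset.sum_sub_distrib, Finset.sum_const, nsmul_eq_mul]
      have : (t.card : ℝ) * (w * M) = (w * t.card) * M := by ring
      rw [this, hsum, one_mul]
    rw [← key]
    apply Finset.sum_le_sum
    intro i _
    exact mul_le_mul_of_nonneg_left (le_max_left _ _) hw
  · exact Finset.sum_nonneg (fun i _ => mul_nonneg hw (le_max_right _ _))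

lemma card_sup_add_one_le {p' : ℕ} (K : Fin p' → Finset ℕ)
    (hnd : ¬ ∀ i j, i ≠ j → Disjoint (K i) (K j)) :
    (Finset.univ.sup K).card + 1 ≤ ∑ m, (K m).card := by
  classical
  push_neg at hnd
  obtain ⟨i, j, hij, hndij⟩ := hnd
  obtain ⟨x, hxi, hxj⟩ := Finset.not_disjoint_iff.mp hndij
  have hdecomp : Finset.univ.sup K = K j ∪ (Finset.univ.erase j).sup K := by
    conv_lhs => rw [← Finset.insert_erase (Finset.mem_univ j)]
    rw [Finset.sup_insert]
    rfl
  have hKiB : K i ⊆ (Finset.univ.erase j).sup K :=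
    Finset.le_sup (Finset.mem_erase.mpr ⟨hij, Finset.mem_univ i⟩)
  have h1 : 1 ≤ (K j ∩ (Finset.univ.erase j).sup K).card :=
    Finset.card_pos.mpr ⟨x, Finset.mem_inter.mpr ⟨hxj, hKiB hxi⟩⟩
  have h2 := Finset.card_union_add_card_inter (K j) ((Finset.univ.erase j).sup K)
  have h3 : ((Finset.univ.erase j).sup K).card ≤ ∑ m ∈ Finset.univ.erase j, (K m).card := by
    rw [Finset.sup_eq_biUnion]; exact Finset.card_biUnion_le
  have h4 : ∑ m ∈ Finset.univ.erase j, (K m).card + (K j).card = ∑ m, (K m).card :=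
    Finset.sum_erase_add _ _ (Finset.mem_univ j)
  rw [hdecomp]
  omega

lemma card_nondisjoint_le {p' : ℕ} (s : Fin p' → ℕ) (N L : ℕ)
    (hsum : ∑ m, s m = L) (hN : L - 1 ≤ N) :
    (((Fintype.piFinset (fun m => Finset.powersetCard (s m) (Finset.range N))).filter
      (fun K => ¬ ∀ i j, i ≠ j → Disjoint (K i) (K j))).card)
      ≤ N.choose (L-1) * ∏ m, (L-1).choose (s m) := by
  classical
  have hsubset : ((Fintype.piFinset (fun m => Finset.powersetCard (s m) (Finset.range N))).filter
      (fun K => ¬ ∀ i j, i ≠ j → Disjoint (K i) (K j))) ⊆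
      (Finset.powersetCard (L-1) (Finset.range N)).biUnion
      (fun U => Fintype.piFinset (fun m => Finset.powersetCard (s m) U)) := by
    intro K hK
    rw [Finset.mem_filter] at hK
    obtain ⟨hKmem, hKnd⟩ := hK
    have hcards : ∀ m, (K m).card = s m ∧ K m ⊆ Finset.range N := by
      intro m
      have hm := Fintype.mem_piFinset.mp hKmem m
      rw [Finset.mem_powersetCard] at hm
      exact ⟨hm.2, hm.1⟩
    have hsup : (Finset.univ.sup K).card + 1 ≤ L := by
      calc (Finset.univ.sup K).card + 1 ≤ ∑ m, (K m).card := card_sup_add_one_le K hKnd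
        _ = L := by rw [Finset.sum_congr rfl (fun m _ => (hcards m).1), hsum]
    have hsupsub : Finset.univ.sup K ⊆ Finset.range N :=
      Finset.sup_le (fun m _ => (hcards m).2)
    obtain ⟨U, hU1, hU2, hU3⟩ := Finset.exists_subsuperset_card_eq (n := L-1) hsupsub (by omega)
      (by rw [Finset.card_range]; exact hN)
    apply Finset.mem_biUnion.mpr
    refine ⟨U, Finset.mem_powersetCard.mpr ⟨hU2, hU3⟩, ?_⟩
    apply Fintype.mem_piFinset.mpr
    intro m
    rw [Finset.mem_powersetCard]
    exact ⟨(Finset.le_sup (Finset.mem_univ m)).trans hU1, (hcards m).1⟩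
  calc ((Fintype.piFinset (fun m => Finset.powersetCard (s m) (Finset.range N))).filter
      (fun K => ¬ ∀ i j, i ≠ j → Disjoint (K i) (K j))).card
      ≤ ((Finset.powersetCard (L-1) (Finset.range N)).biUnion
        (fun U => Fintype.piFinset (fun m => Finset.powersetCard (s m) U))).card :=
      Finset.card_le_card hsubset
    _ ≤ ∑ U ∈ Finset.powersetCard (L-1) (Finset.range N),
        (Fintype.piFinset (fun m => Finset.powersetCard (s m) U)).card :=
      Finset.card_biUnion_le
    _ = ∑ _U ∈ Finset.powersetCard (L-1) (Finset.range N), ∏ m, (L-1).choose (s m) := by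
      apply Finset.sum_congr rfl; intro U hU
      rw [Fintype.card_piFinset]
      apply Finset.prod_congr rfl; intro m _
      rw [Finset.card_powersetCard, (Finset.mem_powersetCard.mp hU).2]
    _ = N.choose (L-1) * ∏ m, (L-1).choose (s m) := by
      rw [Finset.sum_const, Finset.card_powersetCard, Finset.card_range, smul_eq_mul]

lemma tendsto_choose_ratio {n : ℕ} (s : Fin n → ℕ) (L : ℕ)
    (hsum : ∑ m, s m = L) (hL : 0 < L) :
    Tendsto (fun N : ℕ => (N.choose (L-1) : ℝ) / ∏ m, (N.choose (s m) : ℝ)) atTop (𝓝 0) := by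
  set F : ℝ := ∏ m, ((s m).factorial : ℝ) with hFdef
  have hF : 0 < F := Finset.prod_pos (fun m _ => by positivity)
  apply squeeze_zero' (g := fun N : ℕ => (F * 2^L) / N)
  · filter_upwards with N
    positivity
  · filter_upwards [eventually_ge_atTop (2*L + 1)] with N hN
    have hNpos : 0 < N := by omega
    have hsm : ∀ m, s m ≤ L := fun m => hsum ▸ Finset.single_le_sum
      (f := s) (fun _ _ => Nat.zero_le _) (Finset.mem_univ m)
    have hNL : (L : ℝ) ≤ (N : ℝ) / 2 := by
      have : (2 * L : ℕ) ≤ N := by omega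
      have h2 : ((2 * L : ℕ) : ℝ) ≤ N := by exact_mod_cast this
      push_cast at h2
      linarith
    have hden : ((N:ℝ)/2)^L / F ≤ ∏ m, (N.choose (s m) : ℝ) := by
      have heq : ((N:ℝ)/2)^L / F = ∏ m, ((N:ℝ)/2)^(s m) / ((s m).factorial : ℝ) := by
        rw [hFdef, ← hsum, ← Finset.prod_pow_eq_pow_sum, ← Finset.prod_div_distrib]
      rw [heq]
      apply Finset.prod_le_prod
      · intro m _; positivity
      · intro m _
        refine le_trans ?_ (Nat.pow_le_choose (s m) N)
        have hbase : (N:ℝ)/2 ≤ ((N + 1 - s m : ℕ) : ℝ) := by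
          have hs := hsm m
          have h1 : N - L ≤ N + 1 - s m := by omega
          have h3 : ((N - L : ℕ):ℝ) ≤ ((N + 1 - s m : ℕ):ℝ) := by exact_mod_cast h1
          have h2 : ((N - L : ℕ) : ℝ) = (N:ℝ) - L := by
            rw [Nat.cast_sub (by omega)]
          rw [h2] at h3
          linarith
        gcongr
    have hnum : (N.choose (L-1) : ℝ) ≤ (N:ℝ)^(L-1) := by
      exact_mod_cast Nat.choose_le_pow N (L-1)
    have hdpos : (0:ℝ) < ∏ m, (N.choose (s m) : ℝ) :=
      Finset.prod_pos (fun m _ => by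
        have hc : 0 < N.choose (s m) := Nat.choose_pos (le_trans (hsm m) (by omega))
        exact_mod_cast hc)
    rw [div_le_div_iff₀ hdpos (by exact_mod_cast hNpos : (0:ℝ) < N)]
    have hNL1 : (N:ℝ)^(L-1) * N = (N:ℝ)^L := by
      rw [← pow_succ]; congr 1; omega
    calc (N.choose (L-1):ℝ) * N ≤ (N:ℝ)^(L-1) * N :=
          mul_le_mul_of_nonneg_right hnum (by positivity)
      _ = (N:ℝ)^L := hNL1
      _ = F * 2^L * (((N:ℝ)/2)^L / F) := by
          rw [div_pow]
          field_simp
      _ ≤ F * 2^L * ∏ m, (N.choose (s m):ℝ) :=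
          mul_le_mul_of_nonneg_left hden (by positivity)
  · exact tendsto_const_div_atTop_nhds_zero_nat _

/-- the joint moments of the limiting `U`-statistics `T^{(k_j)}` of an
exchangeable array are given by the joint moment of the entries of the array along any
partition `{J_m}` of `{0,…,L-1}` containing exactly `h_j` sets of size `k_j`:
`E[∏_j (T^{(k_j)})^{h_j}] = E[∏_m X_{J_m}]`. -/
theorem statement5 (k l : ℕ)
    (P : Measure (Idx k → ℝ)) [IsProbabilityMeasure P] (hP : IsExchangeable k P)
    (ks : Fin l → ℕ) (hks : ∀ j, 0 < ks j ∧ ks j ≤ k) (hdec : StrictAnti ks)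
    (h : Fin l → ℕ) (hh : ∀ j, 0 < h j)
    (L p : ℕ) (hL : L = ∑ j, h j * ks j) (hp : p = ∑ j, h j)
    (Js : Fin p → Idx k)
    (hdisj : ∀ m m', m ≠ m' → Disjoint (Js m).1 (Js m').1)
    (hcover : Finset.univ.sup (fun m => (Js m).1) = Finset.range L)
    (hcount : ∀ j, (Finset.univ.filter (fun m => (Js m).1.card = ks j)).card = h j)
    (hint : ∀ j, Integrable
      (fun ω => |ω (idxRange k (ks j) (hks j).1 (hks j).2)| ^ p) P)
    (T : Fin l → (Idx k → ℝ) → ℝ)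
    (hT : ∀ j, ∀ᵐ ω ∂P,
      Tendsto (fun N => TNstat k (ks j) (hks j).1 (hks j).2 N ω) atTop (𝓝 (T j ω))) :
    ∫ ω, ∏ j, (T j ω) ^ (h j) ∂P = ∫ ω, ∏ m, ω (Js m) ∂P := by
  classical
  rcases Nat.eq_zero_or_pos l with hl0 | hlpos
  · subst hl0
    have hp0 : p = 0 := by simpa using hp
    subst hp0
    simp
  have hppos : 0 < p := by
    rw [hp]
    exact Finset.sum_pos (fun j _ => hh j) ⟨⟨0, hlpos⟩, Finset.mem_univ _⟩
  have hLpos : 0 < L := by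
    rw [hL]
    exact Finset.sum_pos (fun j _ => Nat.mul_pos (hh j) (hks j).1) ⟨⟨0, hlpos⟩, Finset.mem_univ _⟩
  set s : Fin p → ℕ := fun m => (Js m).1.card with hs
  have hksinj : Function.Injective ks := hdec.injective
  have hcount' : ∀ j, (Finset.univ.filter (fun m => s m = ks j)).card = h j := by
    intro j
    simpa only [hs] using hcount j
  have hfibdisj : ∀ a ∈ (Finset.univ : Finset (Fin l)), ∀ b ∈ (Finset.univ : Finset (Fin l)),
      a ≠ b → Disjoint (Finset.univ.filter (fun m => s m = ks a))
        (Finset.univ.filter (fun m => s m = ks b)) := by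
    intro a _ b _ hab
    rw [Finset.disjoint_left]
    intro m hm1 hm2
    rw [Finset.mem_filter] at hm1 hm2
    exact hab (hksinj (hm1.2.symm.trans hm2.2))
  have hfib : (Finset.univ : Finset (Fin p)) =
      Finset.univ.biUnion (fun j => Finset.univ.filter (fun m => s m = ks j)) := by
    symm
    apply Finset.eq_univ_of_card
    rw [Finset.card_biUnion hfibdisj, Fintype.card_fin]
    rw [Finset.sum_congr rfl (fun j _ => hcount' j)]
    exact hp.symm
  have hjex : ∀ m : Fin p, ∃ j : Fin l, s m = ks j := by
    intro m
    have hm : m ∈ Finset.univ.biUnion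
        (fun j => Finset.univ.filter (fun m => s m = ks j)) := hfib ▸ Finset.mem_univ m
    obtain ⟨j, _, hj⟩ := Finset.mem_biUnion.mp hm
    exact ⟨j, (Finset.mem_filter.mp hj).2⟩
  choose jdx hjdx using hjex
  have hspos : ∀ m, 0 < s m := fun m => Finset.card_pos.mpr (Js m).2.1
  have hssum : ∑ m, s m = L := by
    have h2 := Finset.card_biUnion (s := Finset.univ) (t := fun m => (Js m).1)
      (fun i _ j _ hij => hdisj i j hij)
    rw [← Finset.sup_eq_biUnion, hcover, Finset.card_range] at h2
    exact h2.symm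
  have hsleL : ∀ m, s m ≤ L := fun m => hssum ▸ Finset.single_le_sum
    (f := s) (fun _ _ => Nat.zero_le _) (Finset.mem_univ m)
  set piF : ℕ → Finset (Fin p → Finset ℕ) :=
    fun N => Fintype.piFinset (fun m => Finset.powersetCard (s m) (Finset.range N)) with hpiF
  set cN : ℕ → ℝ := fun N => ∏ m, ((N.choose (s m) : ℝ))⁻¹ with hcN
  set gN : ℕ → (Idx k → ℝ) → ℝ :=
    fun N ω => ∏ j, (TNstat k (ks j) (hks j).1 (hks j).2 N ω) ^ (h j) with hgN
  set f : (Idx k → ℝ) → ℝ := fun ω => ∏ j, (T j ω) ^ (h j) with hf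
  have hcNnn : ∀ N, 0 ≤ cN N := fun N => Finset.prod_nonneg (fun m _ => by positivity)
  have hexpand : ∀ N ω, gN N ω = cN N * ∑ K ∈ piF N, ∏ m, XV k ω (K m) := by
    intro N ω
    have step1 : gN N ω = ∏ m, (((N.choose (s m) : ℝ))⁻¹ *
        ∑ J ∈ Finset.powersetCard (s m) (Finset.range N), XV k ω J) := by
      rw [hgN]
      conv_rhs => rw [hfib]
      rw [Finset.prod_biUnion hfibdisj]
      apply Finset.prod_congr rfl
      intro j _
      rw [TNstat_eq]
      have hinner : ∀ m ∈ Finset.univ.filter (fun m => s m = ks j),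
          (((N.choose (s m) : ℝ))⁻¹ *
            ∑ J ∈ Finset.powersetCard (s m) (Finset.range N), XV k ω J)
          = (((N.choose (ks j) : ℝ))⁻¹ *
            ∑ J ∈ Finset.powersetCard (ks j) (Finset.range N), XV k ω J) := by
        intro m hm
        rw [(Finset.mem_filter.mp hm).2]
      rw [Finset.prod_congr rfl hinner, Finset.prod_const, hcount' j]
    rw [step1, Finset.prod_mul_distrib, Finset.prod_univ_sum]
  have hXVmeas : ∀ A : Finset ℕ, Measurable (fun ω : Idx k → ℝ => XV k ω A) := by
    intro A
    by_cases hA : A.Nonempty ∧ A.card ≤ k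
    · have heq : (fun ω : Idx k → ℝ => XV k ω A) = fun ω => ω ⟨A, hA⟩ := by
        funext ω; unfold XV; rw [dif_pos hA]
      rw [heq]; exact measurable_pi_apply _
    · have heq : (fun ω : Idx k → ℝ => XV k ω A) = fun _ => (0:ℝ) := by
        funext ω; unfold XV; rw [dif_neg hA]
      rw [heq]; exact measurable_const
  have hmeasgN : ∀ N, Measurable (gN N) := by
    intro N
    rw [hgN]
    apply Finset.measurable_prod
    intro j _
    apply Measurable.pow_const
    unfold TNstat
    apply Measurable.const_mul
    exact Finset.measurable_sum _ (fun J _ => measurable_pi_apply _)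
  have hXint : ∀ (A : Finset ℕ) (j : Fin l), A.card = ks j →
      Integrable (fun ω => |XV k ω A| ^ p) P := by
    intro A j hA
    have hbase : Integrable (fun ω => |XV k ω (Finset.range (ks j))| ^ p) P := by
      have heq : (fun ω : Idx k → ℝ => |XV k ω (Finset.range (ks j))| ^ p)
          = fun ω => |ω (idxRange k (ks j) (hks j).1 (hks j).2)| ^ p := by
        funext ω
        rw [show XV k ω (Finset.range (ks j)) = ω (idxRange k (ks j) (hks j).1 (hks j).2)
          from XV_coe ω (idxRange k (ks j) (hks j).1 (hks j).2)]
      rw [heq]; exact hint j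
    exact integrable_comp_XV hP A (Finset.range (ks j))
      (by rw [hA, Finset.card_range]) (fun x => |x| ^ p) hbase
  have hprodbound : ∀ (K : Fin p → Finset ℕ) (ω : Idx k → ℝ),
      |∏ m, XV k ω (K m)| ≤ (p:ℝ)⁻¹ * ∑ m, |XV k ω (K m)| ^ p := by
    intro K ω
    rw [Finset.abs_prod]
    exact prod_abs_le_sum_pow hppos (fun m => XV k ω (K m))
  have hKcard : ∀ N, ∀ K ∈ piF N, ∀ m, (K m).card = s m := by
    intro N K hK m
    exact (Finset.mem_powersetCard.mp (Fintype.mem_piFinset.mp hK m)).2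
  have hsumint : ∀ (K : Fin p → Finset ℕ), (∀ m, (K m).card = s m) →
      Integrable (fun ω => (p:ℝ)⁻¹ * ∑ m, |XV k ω (K m)| ^ p) P := by
    intro K hKc
    apply Integrable.const_mul
    apply integrable_finset_sum
    intro m _
    exact hXint (K m) (jdx m) (by rw [hKc m, hjdx m])
  have hprodint : ∀ N, ∀ K ∈ piF N, Integrable (fun ω => ∏ m, XV k ω (K m)) P := by
    intro N K hK
    have hmeas : Measurable (fun ω => ∏ m, XV k ω (K m)) :=
      Finset.measurable_prod _ (fun m _ => hXVmeas (K m))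
    apply (hsumint K (hKcard N K hK)).mono hmeas.aestronglyMeasurable
    filter_upwards with ω
    rw [Real.norm_eq_abs, Real.norm_eq_abs]
    exact le_trans (hprodbound K ω) (le_abs_self _)
  set R : ℝ := ∫ ω, ∏ m, XV k ω ((Js m).1) ∂P with hR
  have hRHS : ∫ ω, ∏ m, ω (Js m) ∂P = R := by
    rw [hR]
    apply integral_congr_ae
    filter_upwards with ω
    exact Finset.prod_congr rfl (fun m _ => (XV_coe ω (Js m)).symm)
  have hIdisj : ∀ N, ∀ K ∈ piF N, (∀ i j', i ≠ j' → Disjoint (K i) (K j')) →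
      ∫ ω, ∏ m, XV k ω (K m) ∂P = R := by
    intro N K hK hKd
    exact integral_prod_XV_eq hP K (fun m => (Js m).1) hKd
      (fun i j' hij => hdisj i j' hij) (fun m => hKcard N K hK m)
  set M0 : ℝ := (p:ℝ)⁻¹ * ∑ m, ∫ ω, |XV k ω (Finset.range (s m))| ^ p ∂P with hM0
  have hIbnd : ∀ N, ∀ K ∈ piF N, |∫ ω, ∏ m, XV k ω (K m) ∂P| ≤ M0 := by
    intro N K hK
    have h1 : |∫ ω, ∏ m, XV k ω (K m) ∂P| ≤ ∫ ω, |∏ m, XV k ω (K m)| ∂P := by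
      simpa only [Real.norm_eq_abs] using
        norm_integral_le_integral_norm (μ := P) (fun ω => ∏ m, XV k ω (K m))
    have h2 : ∫ ω, |∏ m, XV k ω (K m)| ∂P
        ≤ ∫ ω, (p:ℝ)⁻¹ * ∑ m, |XV k ω (K m)| ^ p ∂P := by
      apply integral_mono_of_nonneg
      · filter_upwards with ω; positivity
      · exact hsumint K (hKcard N K hK)
      · filter_upwards with ω; exact hprodbound K ω
    have h3 : ∫ ω, (p:ℝ)⁻¹ * ∑ m, |XV k ω (K m)| ^ p ∂P
        = (p:ℝ)⁻¹ * ∑ m, ∫ ω, |XV k ω (K m)| ^ p ∂P := by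
      rw [integral_const_mul]
      congr 1
      exact integral_finset_sum _ (fun m _ => hXint (K m) (jdx m)
        (by rw [hKcard N K hK m, hjdx m]))
    have h4 : ∀ m, ∫ ω, |XV k ω (K m)| ^ p ∂P
        = ∫ ω, |XV k ω (Finset.range (s m))| ^ p ∂P :=
      fun m => integral_comp_XV_eq hP (K m) (Finset.range (s m))
        (by rw [hKcard N K hK m, Finset.card_range]) (fun x => |x| ^ p)
    calc |∫ ω, ∏ m, XV k ω (K m) ∂P|
        ≤ ∫ ω, (p:ℝ)⁻¹ * ∑ m, |XV k ω (K m)| ^ p ∂P := le_trans h1 h2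
      _ = (p:ℝ)⁻¹ * ∑ m, ∫ ω, |XV k ω (K m)| ^ p ∂P := h3
      _ = M0 := by rw [hM0]; congr 1; exact Finset.sum_congr rfl (fun m _ => h4 m)
  have hintgN : ∀ N, ∫ ω, gN N ω ∂P
      = cN N * ∑ K ∈ piF N, ∫ ω, ∏ m, XV k ω (K m) ∂P := by
    intro N
    calc ∫ ω, gN N ω ∂P = ∫ ω, cN N * ∑ K ∈ piF N, ∏ m, XV k ω (K m) ∂P :=
        integral_congr_ae (by filter_upwards with ω; exact hexpand N ω)
      _ = cN N * ∫ ω, ∑ K ∈ piF N, ∏ m, XV k ω (K m) ∂P := integral_const_mul _ _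
      _ = cN N * ∑ K ∈ piF N, ∫ ω, ∏ m, XV k ω (K m) ∂P := by
          rw [integral_finset_sum _ (fun K hK => hprodint N K hK)]
  have hintgNN : ∀ N, Integrable (gN N) P := by
    intro N
    have : Integrable (fun ω => cN N * ∑ K ∈ piF N, ∏ m, XV k ω (K m)) P :=
      (integrable_finset_sum _ (fun K hK => hprodint N K hK)).const_mul _
    apply this.congr
    filter_upwards with ω
    exact (hexpand N ω).symm
  have hM0nn : 0 ≤ M0 := by
    rw [hM0]
    apply mul_nonneg (by positivity)
    apply Finset.sum_nonneg
    intro m _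
    apply integral_nonneg
    intro ω; positivity
  have htend1 : Tendsto (fun N => ∫ ω, gN N ω ∂P) atTop (𝓝 R) := by
    rw [tendsto_iff_norm_sub_tendsto_zero]
    apply squeeze_zero' (g := fun N => ((∏ m, ((L-1).choose (s m) : ℝ)) * (M0 + |R|)) *
      ((N.choose (L-1) : ℝ) / ∏ m, (N.choose (s m) : ℝ)))
    · filter_upwards with N; exact norm_nonneg _
    · filter_upwards [eventually_ge_atTop L] with N hNL
      have hchpos : ∀ m, 0 < N.choose (s m) := fun m => Nat.choose_pos (le_trans (hsleL m) hNL)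
      have hcardpiF : ((piF N).card : ℝ) = ∏ m, (N.choose (s m) : ℝ) := by
        rw [hpiF, Fintype.card_piFinset]
        push_cast
        apply Finset.prod_congr rfl
        intro m _
        rw [Finset.card_powersetCard, Finset.card_range]
      have hone : cN N * ((piF N).card : ℝ) = 1 := by
        rw [hcardpiF]
        simp only [hcN]
        rw [← Finset.prod_mul_distrib]
        apply Finset.prod_eq_one
        intro m _
        exact inv_mul_cancel₀ (by exact_mod_cast (hchpos m).ne')
      have hdiff : ∫ ω, gN N ω ∂P - R
          = cN N * ∑ K ∈ piF N, (∫ ω, ∏ m, XV k ω (K m) ∂P - R) := by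
        rw [hintgN N, Finset.sum_sub_distrib, Finset.sum_const, mul_sub, nsmul_eq_mul]
        have hRR : cN N * (((piF N).card : ℝ) * R) = R := by rw [← mul_assoc, hone, one_mul]
        rw [hRR]
      set nd := (piF N).filter (fun K => ¬ ∀ i j', i ≠ j' → Disjoint (K i) (K j')) with hnd
      have hsplit : ∑ K ∈ piF N, (∫ ω, ∏ m, XV k ω (K m) ∂P - R)
          = ∑ K ∈ nd, (∫ ω, ∏ m, XV k ω (K m) ∂P - R) := by
        rw [hnd, ← Finset.sum_filter_add_sum_filter_not (piF N)
          (fun K => ¬ ∀ i j', i ≠ j' → Disjoint (K i) (K j'))]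
        have hz : ∑ K ∈ (piF N).filter
            (fun K => ¬¬ ∀ i j', i ≠ j' → Disjoint (K i) (K j')),
            (∫ ω, ∏ m, XV k ω (K m) ∂P - R) = 0 := by
          apply Finset.sum_eq_zero
          intro K hK
          rw [Finset.mem_filter] at hK
          rw [hIdisj N K hK.1 (not_not.mp hK.2), sub_self]
        rw [hz, add_zero]
      have hcard_nd : (nd.card : ℝ)
          ≤ (N.choose (L-1) : ℝ) * ∏ m, ((L-1).choose (s m) : ℝ) := by
        have hcnl := card_nondisjoint_le s N L hssum (by omega)
        exact_mod_cast hcnl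
      have hMRnn : (0:ℝ) ≤ M0 + |R| := by linarith [abs_nonneg R]
      rw [Real.norm_eq_abs, hdiff, hsplit, abs_mul, abs_of_nonneg (hcNnn N)]
      calc cN N * |∑ K ∈ nd, (∫ ω, ∏ m, XV k ω (K m) ∂P - R)|
          ≤ cN N * ((nd.card : ℝ) * (M0 + |R|)) := by
            apply mul_le_mul_of_nonneg_left _ (hcNnn N)
            calc |∑ K ∈ nd, (∫ ω, ∏ m, XV k ω (K m) ∂P - R)|
                ≤ ∑ K ∈ nd, |∫ ω, ∏ m, XV k ω (K m) ∂P - R| :=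
                  Finset.abs_sum_le_sum_abs _ _
              _ ≤ ∑ K ∈ nd, (M0 + |R|) := by
                  apply Finset.sum_le_sum
                  intro K hK
                  have hKpi : K ∈ piF N := (Finset.mem_filter.mp hK).1
                  calc |∫ ω, ∏ m, XV k ω (K m) ∂P - R|
                      ≤ |∫ ω, ∏ m, XV k ω (K m) ∂P| + |R| := by
                        have habsadd := abs_add_le (∫ ω, ∏ m, XV k ω (K m) ∂P) (-R)
                        simpa [sub_eq_add_neg] using habsadd
                    _ ≤ M0 + |R| := add_le_add_left (hIbnd N K hKpi) _
              _ = (nd.card : ℝ) * (M0 + |R|) := by rw [Finset.sum_const, nsmul_eq_mul]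
        _ ≤ ((∏ m, ((L-1).choose (s m) : ℝ)) * (M0 + |R|)) *
            ((N.choose (L-1) : ℝ) / ∏ m, (N.choose (s m) : ℝ)) := by
            simp only [hcN]
            rw [Finset.prod_inv_distrib, div_eq_mul_inv]
            have hinv : (0:ℝ) ≤ (∏ m, (N.choose (s m):ℝ))⁻¹ := by positivity
            calc (∏ m, (N.choose (s m):ℝ))⁻¹ * ((nd.card : ℝ) * (M0+|R|))
                ≤ (∏ m, (N.choose (s m):ℝ))⁻¹ *
                  (((N.choose (L-1) : ℝ) * ∏ m, ((L-1).choose (s m) : ℝ)) * (M0+|R|)) := by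
                  apply mul_le_mul_of_nonneg_left _ hinv
                  exact mul_le_mul_of_nonneg_right hcard_nd hMRnn
              _ = _ := by ring
    · have hrat := (tendsto_choose_ratio s L hssum hLpos).const_mul
        ((∏ m, ((L-1).choose (s m) : ℝ)) * (M0 + |R|))
      simpa using hrat
  have htend2 : Tendsto (fun N => ∫ ω, gN N ω ∂P) atTop (𝓝 (∫ ω, f ω ∂P)) := by
    have haelim : ∀ᵐ ω ∂P, Tendsto (fun N => gN N ω) atTop (𝓝 (f ω)) := by
      have hall := (ae_all_iff (μ := P)).mpr hT
      filter_upwards [hall] with ω hω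
      simp only [hgN, hf]
      exact tendsto_finset_prod _ (fun j _ => (hω j).pow (h j))
    set q : Fin l → (Idx k → ℝ) → ℝ := fun j ω => |XV k ω (Finset.range (ks j))| ^ p with hq
    have hqint : ∀ j, Integrable (q j) P := fun j => hXint _ j (Finset.card_range _)
    have hqnn : ∀ j ω, 0 ≤ q j ω := fun j ω => by simp only [hq]; positivity
    have hqmeas : ∀ j, Measurable (q j) := fun j => ((hXVmeas _).abs).pow_const p
    have hmaxint : ∀ (g : (Idx k → ℝ) → ℝ) (M : ℝ), Integrable g P →
        (∀ ω, 0 ≤ g ω) → 0 ≤ M → Integrable (fun ω => max (g ω - M) 0) P := by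
      intro g M hgint hgnn hM
      apply hgint.mono (Continuous.comp_aestronglyMeasurable
        (((continuous_sub_right M).max continuous_const))
        hgint.aestronglyMeasurable)
      filter_upwards with ω
      rw [Real.norm_eq_abs, Real.norm_eq_abs, abs_of_nonneg (le_max_right _ _),
        abs_of_nonneg (hgnn ω)]
      exact max_le (by linarith [hgnn ω]) (hgnn ω)
    set β : ℕ → ℝ := fun M => ∑ j, ∫ ω, max (q j ω - M) 0 ∂P with hβ
    have hβnn : ∀ M, 0 ≤ β M := fun M => Finset.sum_nonneg fun j _ =>
      integral_nonneg (fun ω => le_max_right _ _)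
    have hβtend : Tendsto β atTop (𝓝 0) := by
      have h00 : (0:ℝ) = ∑ _j : Fin l, (0:ℝ) := by simp
      rw [hβ, h00]
      apply tendsto_finset_sum
      intro j _
      have hdct := tendsto_integral_of_dominated_convergence (μ := P)
        (F := fun (M:ℕ) ω => max (q j ω - M) 0) (f := fun _ => (0:ℝ)) (bound := q j)
        (fun M => (((hqmeas j).sub measurable_const).max measurable_const).aestronglyMeasurable)
        (hqint j)
        (fun M => by
          filter_upwards with ω
          rw [Real.norm_eq_abs, abs_of_nonneg (le_max_right _ _)]
          have hMnn : (0:ℝ) ≤ (M:ℝ) := Nat.cast_nonneg M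
          exact max_le (by linarith [hqnn j ω]) (hqnn j ω))
        (by
          filter_upwards with ω
          apply tendsto_atTop_of_eventually_const (i₀ := ⌈q j ω⌉₊)
          intro M hM
          have hqM : q j ω - M ≤ 0 := by
            have := (Nat.ceil_le (a := q j ω)).mp hM
            linarith
          exact max_eq_right hqM)
      simpa using hdct
    have honeN : ∀ N, (∀ m, s m ≤ N) → cN N * ((piF N).card : ℝ) = 1 := by
      intro N hz
      have hchpos : ∀ m, 0 < N.choose (s m) := fun m => Nat.choose_pos (hz m)
      have hcardpiF : ((piF N).card : ℝ) = ∏ m, (N.choose (s m) : ℝ) := by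
        rw [hpiF, Fintype.card_piFinset]
        push_cast
        apply Finset.prod_congr rfl
        intro m _
        rw [Finset.card_powersetCard, Finset.card_range]
      rw [hcardpiF]
      simp only [hcN]
      rw [← Finset.prod_mul_distrib]
      apply Finset.prod_eq_one
      intro m _
      exact inv_mul_cancel₀ (by exact_mod_cast (hchpos m).ne')
    have hgtrunc : ∀ (M : ℕ) (N : ℕ),
        ∫ ω, max (|gN N ω| - (M:ℝ)) 0 ∂P ≤ β M := by
      intro M N
      have hM : (0:ℝ) ≤ (M:ℝ) := Nat.cast_nonneg M
      by_cases hz : ∀ m, s m ≤ N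
      · have hone := honeN N hz
        have hptw : ∀ ω, max (|gN N ω| - (M:ℝ)) 0 ≤
            ∑ K ∈ piF N, cN N * ((p:ℝ)⁻¹ * ∑ m, max (|XV k ω (K m)| ^ p - (M:ℝ)) 0) := by
          intro ω
          have h1 : |gN N ω| ≤ ∑ K ∈ piF N, cN N * ((p:ℝ)⁻¹ * ∑ m, |XV k ω (K m)| ^ p) := by
            rw [hexpand N ω, abs_mul, abs_of_nonneg (hcNnn N)]
            calc cN N * |∑ K ∈ piF N, ∏ m, XV k ω (K m)|
                ≤ cN N * ∑ K ∈ piF N, ((p:ℝ)⁻¹ * ∑ m, |XV k ω (K m)| ^ p) := by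
                  apply mul_le_mul_of_nonneg_left _ (hcNnn N)
                  refine le_trans (Finset.abs_sum_le_sum_abs _ _) ?_
                  exact Finset.sum_le_sum (fun K _ => hprodbound K ω)
              _ = ∑ K ∈ piF N, cN N * ((p:ℝ)⁻¹ * ∑ m, |XV k ω (K m)| ^ p) := by
                  rw [Finset.mul_sum]
          calc max (|gN N ω| - (M:ℝ)) 0
              ≤ max ((∑ K ∈ piF N, cN N * ((p:ℝ)⁻¹ * ∑ m, |XV k ω (K m)| ^ p)) - (M:ℝ)) 0 :=
                max_le_max (sub_le_sub_right h1 _) le_rfl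
            _ ≤ ∑ K ∈ piF N, cN N * max (((p:ℝ)⁻¹ * ∑ m, |XV k ω (K m)| ^ p) - (M:ℝ)) 0 :=
                max_sub_sum_le (piF N) (cN N) (hcNnn N) _ (M:ℝ) hone
            _ ≤ ∑ K ∈ piF N, cN N * ((p:ℝ)⁻¹ * ∑ m, max (|XV k ω (K m)| ^ p - (M:ℝ)) 0) := by
                apply Finset.sum_le_sum
                intro K _
                apply mul_le_mul_of_nonneg_left _ (hcNnn N)
                have hin := max_sub_sum_le (Finset.univ : Finset (Fin p)) (p:ℝ)⁻¹
                  (by positivity) (fun m => |XV k ω (K m)| ^ p) (M:ℝ)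
                  (by
                    rw [Finset.card_univ, Fintype.card_fin]
                    exact inv_mul_cancel₀ (by exact_mod_cast hppos.ne'))
                calc max (((p:ℝ)⁻¹ * ∑ m, |XV k ω (K m)| ^ p) - (M:ℝ)) 0
                    = max ((∑ m, (p:ℝ)⁻¹ * |XV k ω (K m)| ^ p) - (M:ℝ)) 0 := by
                      rw [Finset.mul_sum]
                  _ ≤ ∑ m, (p:ℝ)⁻¹ * max (|XV k ω (K m)| ^ p - (M:ℝ)) 0 := hin
                  _ = (p:ℝ)⁻¹ * ∑ m, max (|XV k ω (K m)| ^ p - (M:ℝ)) 0 := by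
                      rw [Finset.mul_sum]
        have hterm_int : ∀ (K : Fin p → Finset ℕ), K ∈ piF N → ∀ m : Fin p,
            Integrable (fun ω => max (|XV k ω (K m)| ^ p - (M:ℝ)) 0) P := by
          intro K hK m
          exact hmaxint (fun ω => |XV k ω (K m)| ^ p) (M:ℝ)
            (hXint (K m) (jdx m) (by rw [hKcard N K hK m, hjdx m]))
            (fun ω => by positivity) hM
        have hRHSint : Integrable (fun ω => ∑ K ∈ piF N,
            cN N * ((p:ℝ)⁻¹ * ∑ m, max (|XV k ω (K m)| ^ p - (M:ℝ)) 0)) P := by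
          apply integrable_finset_sum
          intro K hK
          exact ((integrable_finset_sum _ (fun m _ => hterm_int K hK m)).const_mul _).const_mul _
        have hint1 : ∫ ω, max (|gN N ω| - (M:ℝ)) 0 ∂P
            ≤ ∫ ω, ∑ K ∈ piF N, cN N *
              ((p:ℝ)⁻¹ * ∑ m, max (|XV k ω (K m)| ^ p - (M:ℝ)) 0) ∂P :=
          integral_mono_of_nonneg (by filter_upwards with ω; exact le_max_right _ _)
            hRHSint (by filter_upwards with ω; exact hptw ω)
        have hint2 : ∫ ω, (∑ K ∈ piF N, cN N *
              ((p:ℝ)⁻¹ * ∑ m, max (|XV k ω (K m)| ^ p - (M:ℝ)) 0)) ∂P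
            = ∑ K ∈ piF N, cN N *
              ((p:ℝ)⁻¹ * ∑ m, ∫ ω, max (|XV k ω (K m)| ^ p - (M:ℝ)) 0 ∂P) := by
          rw [integral_finset_sum _ (fun K hK =>
            ((integrable_finset_sum _ (fun m _ => hterm_int K hK m)).const_mul _).const_mul _)]
          apply Finset.sum_congr rfl
          intro K hK
          rw [integral_const_mul, integral_const_mul,
            integral_finset_sum _ (fun m _ => hterm_int K hK m)]
        have hsumle : ∀ K ∈ piF N,
            (p:ℝ)⁻¹ * ∑ m, ∫ ω, max (|XV k ω (K m)| ^ p - (M:ℝ)) 0 ∂P ≤ β M := by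
          intro K hK
          have hterm_eq : ∀ m : Fin p, ∫ ω, max (|XV k ω (K m)| ^ p - (M:ℝ)) 0 ∂P
              = ∫ ω, max (q (jdx m) ω - (M:ℝ)) 0 ∂P := by
            intro m
            exact integral_comp_XV_eq hP (K m) (Finset.range (ks (jdx m)))
              (by rw [hKcard N K hK m, Finset.card_range, hjdx m])
              (fun x => max (|x| ^ p - (M:ℝ)) 0)
          have hb : ∑ m, ∫ ω, max (|XV k ω (K m)| ^ p - (M:ℝ)) 0 ∂P ≤ (p:ℝ) * β M := by
            calc ∑ m, ∫ ω, max (|XV k ω (K m)| ^ p - (M:ℝ)) 0 ∂P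
                = ∑ m : Fin p, ∫ ω, max (q (jdx m) ω - (M:ℝ)) 0 ∂P :=
                  Finset.sum_congr rfl (fun m _ => hterm_eq m)
              _ ≤ ∑ _m : Fin p, β M := Finset.sum_le_sum (fun m _ =>
                  Finset.single_le_sum (f := fun j => ∫ ω, max (q j ω - (M:ℝ)) 0 ∂P)
                    (fun j _ => integral_nonneg fun ω => le_max_right _ _)
                    (Finset.mem_univ (jdx m)))
              _ = (p:ℝ) * β M := by
                  rw [Finset.sum_const, Finset.card_univ, Fintype.card_fin, nsmul_eq_mul]
          calc (p:ℝ)⁻¹ * ∑ m, ∫ ω, max (|XV k ω (K m)| ^ p - (M:ℝ)) 0 ∂P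
              ≤ (p:ℝ)⁻¹ * ((p:ℝ) * β M) := mul_le_mul_of_nonneg_left hb (by positivity)
            _ = β M := by
                rw [← mul_assoc, inv_mul_cancel₀ (by exact_mod_cast hppos.ne'), one_mul]
        calc ∫ ω, max (|gN N ω| - (M:ℝ)) 0 ∂P
            ≤ ∑ K ∈ piF N, cN N *
              ((p:ℝ)⁻¹ * ∑ m, ∫ ω, max (|XV k ω (K m)| ^ p - (M:ℝ)) 0 ∂P) :=
              hint1.trans_eq hint2
          _ ≤ ∑ _K ∈ piF N, cN N * β M := Finset.sum_le_sum (fun K hK =>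
              mul_le_mul_of_nonneg_left (hsumle K hK) (hcNnn N))
          _ = β M := by
              rw [Finset.sum_const, nsmul_eq_mul]
              have hrw : ((piF N).card : ℝ) * (cN N * β M)
                  = (cN N * ((piF N).card : ℝ)) * β M := by ring
              rw [hrw, honeN N hz, one_mul]
      · push_neg at hz
        obtain ⟨m0, hm0⟩ := hz
        have hc0 : cN N = 0 := by
          simp only [hcN]
          apply Finset.prod_eq_zero (Finset.mem_univ m0)
          rw [Nat.choose_eq_zero_of_lt hm0]
          simp
        have hg0 : ∀ ω, max (|gN N ω| - (M:ℝ)) 0 = 0 := by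
          intro ω
          rw [hexpand N ω, hc0, zero_mul, abs_zero]
          exact max_eq_right (by linarith)
        rw [integral_congr_ae (g := fun _ => (0:ℝ))
          (by filter_upwards with ω; exact hg0 ω)]
        rw [integral_zero]
        exact hβnn M
    have hfmeasaes : AEStronglyMeasurable f P :=
      aestronglyMeasurable_of_tendsto_ae atTop
        (fun N => (hmeasgN N).aestronglyMeasurable) haelim
    have hgNabs : ∀ N, ∫ ω, |gN N ω| ∂P ≤ β 0 := by
      intro N
      have hgt := hgtrunc 0 N
      have heq : ∫ ω, max (|gN N ω| - ((0:ℕ):ℝ)) 0 ∂P = ∫ ω, |gN N ω| ∂P := by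
        apply integral_congr_ae; filter_upwards with ω
        rw [Nat.cast_zero, sub_zero, max_eq_left (abs_nonneg _)]
      rw [heq] at hgt
      exact hgt
    have hfint : Integrable f P := by
      refine ⟨hfmeasaes, ?_⟩
      rw [hasFiniteIntegral_iff_norm]
      have hle : ∫⁻ ω, ENNReal.ofReal ‖f ω‖ ∂P ≤ ENNReal.ofReal (β 0) := by
        have hcongr : ∀ᵐ ω ∂P, ENNReal.ofReal ‖f ω‖
            = liminf (fun N => ENNReal.ofReal |gN N ω|) atTop := by
          filter_upwards [haelim] with ω hω
          symm
          apply Filter.Tendsto.liminf_eq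
          have habs : Tendsto (fun N => |gN N ω|) atTop (𝓝 |f ω|) := hω.abs
          rw [Real.norm_eq_abs]
          exact (ENNReal.continuous_ofReal.tendsto _).comp habs
        rw [lintegral_congr_ae hcongr]
        refine le_trans (lintegral_liminf_le
          (fun N => ENNReal.measurable_ofReal.comp (hmeasgN N).abs)) ?_
        have hev : ∀ N, ∫⁻ ω, ENNReal.ofReal |gN N ω| ∂P ≤ ENNReal.ofReal (β 0) := by
          intro N
          rw [← ofReal_integral_eq_lintegral_ofReal (hintgNN N).abs
            (by filter_upwards with ω; exact abs_nonneg _)]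
          exact ENNReal.ofReal_le_ofReal (hgNabs N)
        calc liminf (fun N => ∫⁻ ω, ENNReal.ofReal |gN N ω| ∂P) atTop
            ≤ liminf (fun _ => ENNReal.ofReal (β 0)) atTop :=
              Filter.liminf_le_liminf (Filter.Eventually.of_forall hev)
          _ = ENNReal.ofReal (β 0) := Filter.liminf_const _
      exact lt_of_le_of_lt hle ENNReal.ofReal_lt_top
    have hftrunc : ∀ M : ℕ, ∫ ω, max (|f ω| - (M:ℝ)) 0 ∂P ≤ β M := by
      intro M
      have hM : (0:ℝ) ≤ (M:ℝ) := Nat.cast_nonneg M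
      have hFint : Integrable (fun ω => max (|f ω| - (M:ℝ)) 0) P :=
        hmaxint (fun ω => |f ω|) (M:ℝ) hfint.abs (fun ω => abs_nonneg _) hM
      have key : ENNReal.ofReal (∫ ω, max (|f ω| - (M:ℝ)) 0 ∂P)
          ≤ ENNReal.ofReal (β M) := by
        rw [ofReal_integral_eq_lintegral_ofReal hFint
          (by filter_upwards with ω; exact le_max_right _ _)]
        have hcongr : ∀ᵐ ω ∂P, ENNReal.ofReal (max (|f ω| - (M:ℝ)) 0)
            = liminf (fun N => ENNReal.ofReal (max (|gN N ω| - (M:ℝ)) 0)) atTop := by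
          filter_upwards [haelim] with ω hω
          symm
          apply Filter.Tendsto.liminf_eq
          have hcont : Continuous (fun x : ℝ => ENNReal.ofReal (max (|x| - (M:ℝ)) 0)) :=
            ENNReal.continuous_ofReal.comp
              ((continuous_abs.sub continuous_const).max continuous_const)
          exact (hcont.tendsto _).comp hω
        rw [lintegral_congr_ae hcongr]
        refine le_trans (lintegral_liminf_le (fun N => ENNReal.measurable_ofReal.comp
          (((hmeasgN N).abs.sub measurable_const).max measurable_const))) ?_
        have hev : ∀ N, ∫⁻ ω, ENNReal.ofReal (max (|gN N ω| - (M:ℝ)) 0) ∂P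
            ≤ ENNReal.ofReal (β M) := by
          intro N
          rw [← ofReal_integral_eq_lintegral_ofReal
            (hmaxint (fun ω => |gN N ω|) (M:ℝ) (hintgNN N).abs (fun ω => abs_nonneg _) hM)
            (by filter_upwards with ω; exact le_max_right _ _)]
          exact ENNReal.ofReal_le_ofReal (hgtrunc M N)
        calc liminf (fun N => ∫⁻ ω, ENNReal.ofReal (max (|gN N ω| - (M:ℝ)) 0) ∂P) atTop
            ≤ liminf (fun _ => ENNReal.ofReal (β M)) atTop :=
              Filter.liminf_le_liminf (Filter.Eventually.of_forall hev)
          _ = ENNReal.ofReal (β M) := Filter.liminf_const _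
      exact (ENNReal.ofReal_le_ofReal_iff (hβnn M)).mp key
    rw [Metric.tendsto_atTop]
    intro ε hε
    obtain ⟨M, hMlt⟩ := (hβtend.eventually_lt_const (by linarith : (0:ℝ) < ε/4)).exists
    have hM : (0:ℝ) ≤ (M:ℝ) := Nat.cast_nonneg M
    have htrcont : Continuous (trunc (M:ℝ)) :=
      (continuous_id.min continuous_const).max continuous_const
    have htrAESM : ∀ N, AEStronglyMeasurable
        (fun ω => |trunc (M:ℝ) (gN N ω) - trunc (M:ℝ) (f ω)|) P := by
      intro N
      have hsub : AEStronglyMeasurable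
          (fun ω => trunc (M:ℝ) (gN N ω) - trunc (M:ℝ) (f ω)) P :=
        (htrcont.comp_aestronglyMeasurable (hmeasgN N).aestronglyMeasurable).sub
          (htrcont.comp_aestronglyMeasurable hfmeasaes)
      exact continuous_abs.comp_aestronglyMeasurable hsub
    have htr2M : ∀ N ω, |trunc (M:ℝ) (gN N ω) - trunc (M:ℝ) (f ω)| ≤ 2 * (M:ℝ) := by
      intro N ω
      calc |trunc (M:ℝ) (gN N ω) - trunc (M:ℝ) (f ω)|
          ≤ |trunc (M:ℝ) (gN N ω)| + |trunc (M:ℝ) (f ω)| := by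
            have habsadd := abs_add_le (trunc (M:ℝ) (gN N ω)) (-(trunc (M:ℝ) (f ω)))
            simpa [sub_eq_add_neg] using habsadd
        _ ≤ (M:ℝ) + (M:ℝ) := add_le_add (abs_trunc_le _ _ hM) (abs_trunc_le _ _ hM)
        _ = 2 * (M:ℝ) := by ring
    have hDCT : Tendsto (fun N => ∫ ω, |trunc (M:ℝ) (gN N ω) - trunc (M:ℝ) (f ω)| ∂P)
        atTop (𝓝 0) := by
      have h00 : (0:ℝ) = ∫ (_ : Idx k → ℝ), (0:ℝ) ∂P := by simp
      rw [h00]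
      apply tendsto_integral_of_dominated_convergence (bound := fun _ => 2 * (M:ℝ))
        htrAESM (integrable_const _)
      · intro N
        filter_upwards with ω
        rw [Real.norm_eq_abs, abs_abs]
        exact htr2M N ω
      · filter_upwards [haelim] with ω hω
        have hcont2 : Continuous (fun x : ℝ => |trunc (M:ℝ) x - trunc (M:ℝ) (f ω)|) :=
          (htrcont.sub continuous_const).abs
        have hcomp := (hcont2.tendsto _).comp hω
        simpa [Function.comp_def] using hcomp
    obtain ⟨N₀, hN₀⟩ := Filter.eventually_atTop.mp
      (hDCT.eventually_lt_const (by linarith : (0:ℝ) < ε/4))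
    refine ⟨N₀, fun N hN => ?_⟩
    have htrint : Integrable (fun ω => |trunc (M:ℝ) (gN N ω) - trunc (M:ℝ) (f ω)|) P := by
      apply (integrable_const (2 * (M:ℝ))).mono (htrAESM N)
      filter_upwards with ω
      rw [Real.norm_eq_abs, abs_abs, Real.norm_eq_abs]
      exact le_trans (htr2M N ω) (le_abs_self _)
    have hmaxgint : Integrable (fun ω => max (|gN N ω| - (M:ℝ)) 0) P :=
      hmaxint (fun ω => |gN N ω|) (M:ℝ) (hintgNN N).abs (fun ω => abs_nonneg _) hM
    have hmaxfint : Integrable (fun ω => max (|f ω| - (M:ℝ)) 0) P :=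
      hmaxint (fun ω => |f ω|) (M:ℝ) hfint.abs (fun ω => abs_nonneg _) hM
    have hdist : dist (∫ ω, gN N ω ∂P) (∫ ω, f ω ∂P)
        ≤ ∫ ω, |trunc (M:ℝ) (gN N ω) - trunc (M:ℝ) (f ω)| ∂P + β M + β M := by
      rw [Real.dist_eq, ← integral_sub (hintgNN N) hfint]
      have h1 : |∫ ω, (gN N ω - f ω) ∂P| ≤ ∫ ω, |gN N ω - f ω| ∂P := by
        simpa only [Real.norm_eq_abs] using
          norm_integral_le_integral_norm (μ := P) (fun ω => gN N ω - f ω)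
      refine le_trans h1 ?_
      have h2 : ∫ ω, |gN N ω - f ω| ∂P
          ≤ ∫ ω, (|trunc (M:ℝ) (gN N ω) - trunc (M:ℝ) (f ω)|
            + max (|gN N ω| - (M:ℝ)) 0 + max (|f ω| - (M:ℝ)) 0) ∂P := by
        apply integral_mono_of_nonneg (by filter_upwards with ω; exact abs_nonneg _)
        · exact (htrint.add hmaxgint).add hmaxfint
        · filter_upwards with ω
          exact abs_sub_le_trunc (M:ℝ) (gN N ω) (f ω) hM
      refine le_trans h2 ?_
      have e1 : ∫ ω, (|trunc (M:ℝ) (gN N ω) - trunc (M:ℝ) (f ω)|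
            + max (|gN N ω| - (M:ℝ)) 0 + max (|f ω| - (M:ℝ)) 0) ∂P
          = (∫ ω, (|trunc (M:ℝ) (gN N ω) - trunc (M:ℝ) (f ω)|
            + max (|gN N ω| - (M:ℝ)) 0) ∂P) + ∫ ω, max (|f ω| - (M:ℝ)) 0 ∂P :=
        integral_add (htrint.add hmaxgint) hmaxfint
      have e2 : ∫ ω, (|trunc (M:ℝ) (gN N ω) - trunc (M:ℝ) (f ω)|
            + max (|gN N ω| - (M:ℝ)) 0) ∂P
          = (∫ ω, |trunc (M:ℝ) (gN N ω) - trunc (M:ℝ) (f ω)| ∂P)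
            + ∫ ω, max (|gN N ω| - (M:ℝ)) 0 ∂P :=
        integral_add htrint hmaxgint
      rw [e1, e2]
      exact add_le_add (add_le_add le_rfl (hgtrunc M N)) (hftrunc M)
    have hlt := hN₀ N hN
    rw [Real.dist_eq] at hdist ⊢
    linarith
  rw [hRHS]
  exact tendsto_nhds_unique htend2 htend1

end
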